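/- Let h be a real form of degree d in n variables that is indefinite (it attains both positive and negative values on ℝⁿ) and irreducible in the polynomial ring ℝ[x₁,…,xₙ]. If h² = Σ_{j=1}^m h_j² where each h_j is a real form of degree d, then there exist real numbers λ₁,…,λ_m with Σ_{j=1}^m λ_j² = 1 such that h_j = λ_j·h for every j. -/

import Mathlib

open MvPolynomial

private lemma irreducible_map_equiv' {α β : Type*} [Monoid α] [Monoid β] (e : α ≃* β) {a : α}
    (ha : Irreducible a) : Irreducible (e a) := by
  constructor
  · intro hu
    exact ha.not_isUnit (by simpa using hu.map e.symm.toMonoidHom)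
  · intro x y hxy
    have hax : a = e.symm x * e.symm y := by
      rw [← map_mul]
      exact (by simpa using congrArg e.symm hxy)
    rcases ha.isUnit_or_isUnit hax with hu | hu
    · exact Or.inl (by simpa using hu.map e.toMonoidHom)
    · exact Or.inr (by simpa using hu.map e.toMonoidHom)

private lemma eval_smul_homog' {n d : ℕ} (p : MvPolynomial (Fin n) ℝ) (hp : p.IsHomogeneous d)
    (t : ℝ) (x : Fin n → ℝ) : eval (t • x) p = t ^ d * eval x p := by
  rw [eval_eq, eval_eq, Finset.mul_sum]
  refine Finset.sum_congr rfl fun c hc => ?_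
  have hdeg : c.degree = d := by
    by_contra hne
    exact (mem_support_iff.mp hc) (hp.coeff_eq_zero hne)
  have : ∏ i ∈ c.support, (t • x) i ^ c i = t ^ d * ∏ i ∈ c.support, x i ^ c i := by
    simp only [Pi.smul_apply, smul_eq_mul, mul_pow]
    rw [Finset.prod_mul_distrib, Finset.prod_pow_eq_pow_sum]
    rw [← hdeg, Finsupp.degree]
    rfl
  rw [this]; ring

private lemma vanish_ball_zero : ∀ (k : ℕ) (p : MvPolynomial (Fin k) ℝ) (c : Fin k → ℝ) (ε : ℝ), 0 < ε →
    (∀ x : Fin k → ℝ, dist x c < ε → eval x p = 0) → p = 0 := by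
  intro k
  induction k with
  | zero =>
    intro p c ε hε hv
    obtain ⟨r, rfl⟩ := MvPolynomial.C_surjective (Fin 0) p
    have := hv c (by simpa using hε)
    simpa using this
  | succ N ih =>
    intro p c ε hε hv
    have hq : ∀ i, (finSuccEquiv ℝ N p).coeff i = 0 := by
      intro i
      apply ih _ (Fin.tail c) ε hε
      intro u hu
      have hP : Polynomial.map (eval u) (finSuccEquiv ℝ N p) = 0 := by
        apply Polynomial.eq_zero_of_infinite_isRoot
        apply Set.Infinite.mono (s := Set.Ioo (c 0 - ε) (c 0 + ε))
        · intro t ht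
          simp only [Set.mem_setOf_eq, Polynomial.IsRoot]
          rw [← eval_eq_eval_mv_eval']
          apply hv
          rw [dist_pi_lt_iff hε]
          intro j
          refine Fin.cases ?_ ?_ j
          · simp only [Fin.cons_zero]
            rw [Real.dist_eq, abs_lt]
            obtain ⟨h1, h2⟩ := ht
            constructor <;> linarith
          · intro m
            simp only [Fin.cons_succ]
            calc dist (u m) (c m.succ) = dist (u m) (Fin.tail c m) := rfl
              _ ≤ dist u (Fin.tail c) := dist_le_pi_dist u (Fin.tail c) m
              _ < ε := hu
        · exact Set.Ioo_infinite (show c 0 - ε < c 0 + ε by linarith)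
      have := congrArg (fun q => Polynomial.coeff q i) hP
      simpa [Polynomial.coeff_map] using this
    have : finSuccEquiv ℝ N p = 0 := Polynomial.ext fun i => by simp [hq i]
    exact (map_eq_zero_iff _ (AlgEquiv.injective _)).mp this
private lemma key_dvd {N : ℕ} (h f : MvPolynomial (Fin (N+1)) ℝ)
    (hirr : Irreducible h)
    (hdeg : 1 ≤ (finSuccEquiv ℝ N h).natDegree)
    (hzero : ∀ x : Fin (N+1) → ℝ, eval x h = 0 → eval x f = 0)
    (u₀ : Fin N → ℝ) (ε : ℝ) (hε : 0 < ε)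
    (hroot : ∀ u : Fin N → ℝ, dist u u₀ < ε → ∃ t : ℝ, eval (Fin.cons t u) h = 0) :
    h ∣ f := by
  classical
  letI : NormalizationMonoid (MvPolynomial (Fin N) ℝ) :=
    UniqueFactorizationMonoid.normalizationMonoid.toNormalizationMonoid
  letI : NormalizedGCDMonoid (MvPolynomial (Fin N) ℝ) :=
    UniqueFactorizationMonoid.toNormalizedGCDMonoid _
  set K := FractionRing (MvPolynomial (Fin N) ℝ) with hK
  set φ := algebraMap (MvPolynomial (Fin N) ℝ) K with hφ
  set H := finSuccEquiv ℝ N h with hH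
  set Fp := finSuccEquiv ℝ N f with hFp
  have hHirr : Irreducible H :=
    irreducible_map_equiv' (finSuccEquiv ℝ N).toRingEquiv.toMulEquiv hirr
  have hHprim : H.IsPrimitive := by
    intro r hr
    rcases hr with ⟨s, hs⟩
    rcases hHirr.isUnit_or_isUnit hs with hu | hu
    · exact Polynomial.isUnit_C.mp hu
    · exfalso
      obtain ⟨t, -, hts⟩ := Polynomial.isUnit_iff.mp hu
      have : H.natDegree = 0 := by
        rw [hs, ← hts, ← Polynomial.C_mul]
        exact Polynomial.natDegree_C _
      omega
  have hinj : Function.Injective φ := IsFractionRing.injective _ _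
  have hmapinj : Function.Injective (Polynomial.map φ) := Polynomial.map_injective _ hinj
  set HK := H.map φ with hHK
  set FK := Fp.map φ with hFK
  have hHKirr : Irreducible HK :=
    (Polynomial.IsPrimitive.irreducible_iff_irreducible_map_fraction_map hHprim).mp hHirr
  have hdvdK : HK ∣ FK := by
    rcases dvd_or_isCoprime HK FK hHKirr with hd | hco
    · exact hd
    exfalso
    obtain ⟨A, B, hAB⟩ := hco
    obtain ⟨s, hs⟩ := IsLocalization.integerNormalization_map_to_map
      (nonZeroDivisors (MvPolynomial (Fin N) ℝ)) A
    obtain ⟨t, ht⟩ := IsLocalization.integerNormalization_map_to_map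
      (nonZeroDivisors (MvPolynomial (Fin N) ℝ)) B
    set A' := IsLocalization.integerNormalization (nonZeroDivisors (MvPolynomial (Fin N) ℝ)) A
      with hA'
    set B' := IsLocalization.integerNormalization (nonZeroDivisors (MvPolynomial (Fin N) ℝ)) B
      with hB'
    have smul_eq : ∀ (r : MvPolynomial (Fin N) ℝ) (P : Polynomial K),
        r • P = Polynomial.C (φ r) * P := by
      intro r P
      rw [Algebra.smul_def, Polynomial.algebraMap_apply]
    have hG : A' * Polynomial.C (t : MvPolynomial (Fin N) ℝ) * H
        + B' * Polynomial.C (s : MvPolynomial (Fin N) ℝ) * Fp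
        = Polynomial.C ((s : MvPolynomial (Fin N) ℝ) * (t : MvPolynomial (Fin N) ℝ)) := by
      apply hmapinj
      rw [Polynomial.map_add, Polynomial.map_mul, Polynomial.map_mul, Polynomial.map_mul,
        Polynomial.map_mul, Polynomial.map_C, Polynomial.map_C, Polynomial.map_C, hs, ht,
        smul_eq, smul_eq]
      rw [map_mul]
      calc Polynomial.C (φ s) * A * Polynomial.C (φ t) * H.map φ
          + Polynomial.C (φ t) * B * Polynomial.C (φ s) * Fp.map φ
          = Polynomial.C (φ s) * Polynomial.C (φ t) * (A * HK + B * FK) := by ring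
        _ = Polynomial.C (φ s * φ t) := by rw [hAB, mul_one, map_mul]
    have hst : (s : MvPolynomial (Fin N) ℝ) * (t : MvPolynomial (Fin N) ℝ) ≠ 0 :=
      mul_ne_zero (nonZeroDivisors.ne_zero s.2) (nonZeroDivisors.ne_zero t.2)
    obtain ⟨u, hu, hne⟩ : ∃ u : Fin N → ℝ, dist u u₀ < ε
        ∧ eval u ((s : MvPolynomial (Fin N) ℝ) * (t : MvPolynomial (Fin N) ℝ)) ≠ 0 := by
      by_contra hc
      push_neg at hc
      exact hst (vanish_ball_zero N _ u₀ ε hε hc)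
    obtain ⟨t₀, ht₀⟩ := hroot u hu
    have hf₀ : eval (Fin.cons t₀ u) f = 0 := hzero _ ht₀
    have := congrArg (fun P : Polynomial (MvPolynomial (Fin N) ℝ) =>
      Polynomial.eval t₀ (P.map (eval u))) hG
    simp only [Polynomial.map_add, Polynomial.map_mul, Polynomial.map_C, Polynomial.eval_add,
      Polynomial.eval_mul, Polynomial.eval_C] at this
    rw [hH, hFp] at this
    rw [show Polynomial.eval t₀ (Polynomial.map (eval u) ((finSuccEquiv ℝ N) h))
          = eval (Fin.cons t₀ u) h from (eval_eq_eval_mv_eval' u t₀ h).symm,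
      show Polynomial.eval t₀ (Polynomial.map (eval u) ((finSuccEquiv ℝ N) f))
          = eval (Fin.cons t₀ u) f from (eval_eq_eval_mv_eval' u t₀ f).symm, ht₀, hf₀] at this
    simp only [mul_zero, add_zero, zero_add] at this
    exact hne this.symm
  -- descend divisibility
  by_cases hf0 : f = 0
  · simp [hf0]
  have hFp0 : Fp ≠ 0 := by
    rw [hFp]
    intro hh
    exact hf0 ((map_eq_zero_iff (finSuccEquiv ℝ N) (AlgEquiv.injective _)).mp hh)
  have hHKprime : Prime HK := UniqueFactorizationMonoid.irreducible_iff_prime.mp hHKirr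
  have hcontent : Fp.content ≠ 0 := by
    rwa [Ne, Polynomial.content_eq_zero_iff]
  have hCunit : IsUnit (Polynomial.C (φ Fp.content)) :=
    Polynomial.isUnit_C.mpr (isUnit_iff_ne_zero.mpr (fun hh => hcontent (hinj (by simpa using hh))))
  have hsplit : FK = Polynomial.C (φ Fp.content) * (Fp.primPart.map φ) := by
    conv_lhs => rw [hFK, Fp.eq_C_content_mul_primPart]
    rw [Polynomial.map_mul, Polynomial.map_C]
  have hdvdPP : HK ∣ Fp.primPart.map φ := by
    rcases (hHKprime.2.2 _ _ (hsplit ▸ hdvdK)) with hd | hd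
    · exact absurd (isUnit_of_dvd_unit hd hCunit) hHKprime.not_unit
    · exact hd
  have hHPP : H ∣ Fp.primPart :=
    Polynomial.IsPrimitive.dvd_of_fraction_map_dvd_fraction_map (K := K) hHprim
      hdvdPP
  have hHFp : H ∣ Fp := hHPP.trans Fp.primPart_dvd
  obtain ⟨q, hq⟩ := hHFp
  refine ⟨(finSuccEquiv ℝ N).symm q, (finSuccEquiv ℝ N).injective ?_⟩
  rw [map_mul, AlgEquiv.apply_symm_apply]
  rw [hH, hFp] at hq
  exact hq
private lemma exists_linear_equiv {N : ℕ} (b' : Fin (N+1) → ℝ) (hb0 : b' 0 ≠ 0) :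
    ∃ e : MvPolynomial (Fin (N+1)) ℝ ≃ₐ[ℝ] MvPolynomial (Fin (N+1)) ℝ,
      (∀ (p : MvPolynomial (Fin (N+1)) ℝ) (x : Fin (N+1) → ℝ),
        eval x (e p) = eval (fun i => b' i * x 0 + (if i = 0 then 0 else x i)) p) ∧
      (∀ y : Fin (N+1) → ℝ, ∃ x : Fin (N+1) → ℝ,
        (fun i => b' i * x 0 + (if i = 0 then 0 else x i)) = y) := by
  classical
  set φf : Fin (N+1) → MvPolynomial (Fin (N+1)) ℝ :=
    fun i => C (b' i) * X 0 + (if i = 0 then 0 else X i) with hφf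
  set ψf : Fin (N+1) → MvPolynomial (Fin (N+1)) ℝ :=
    fun i => if i = 0 then C (b' 0)⁻¹ * X 0 else X i - C (b' i) * (C (b' 0)⁻¹ * X 0) with hψf
  have hψ0 : ψf 0 = C (b' 0)⁻¹ * X 0 := by simp [hψf]
  have key1 : ∀ i, aeval ψf (φf i) = X i := by
    intro i
    by_cases hi : i = 0
    · subst hi
      simp only [hφf, map_add, map_mul, aeval_C, aeval_X, if_pos rfl, map_zero, add_zero, hψ0, if_true, eq_self_iff_true]
      rw [algebraMap_eq, ← mul_assoc, ← C_mul, mul_inv_cancel₀ hb0, C_1, one_mul]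
    · simp only [hφf, map_add, map_mul, aeval_C, aeval_X, if_neg hi, hψ0, hψf, if_true, eq_self_iff_true]
      rw [algebraMap_eq]
      ring
  have key2 : ∀ i, aeval φf (ψf i) = X i := by
    intro i
    by_cases hi : i = 0
    · subst hi
      rw [hψ0]
      simp only [map_mul, aeval_C, aeval_X, hφf, if_pos rfl, add_zero, if_true, eq_self_iff_true]
      rw [algebraMap_eq, ← mul_assoc, ← C_mul, inv_mul_cancel₀ hb0, C_1, one_mul]
    · simp only [hψf, if_neg hi, map_sub, map_mul, aeval_C, aeval_X, hφf, if_pos rfl, add_zero, if_true, eq_self_iff_true]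
      rw [algebraMap_eq, ← mul_assoc (C (b' 0)⁻¹), ← C_mul, inv_mul_cancel₀ hb0, C_1, one_mul]
      ring
  have hcomp1 : (aeval ψf).comp (aeval φf) = AlgHom.id ℝ (MvPolynomial (Fin (N+1)) ℝ) := by
    rw [comp_aeval]
    rw [show (fun i => aeval ψf (φf i)) = X by funext i; exact key1 i]
    exact aeval_X_left
  have hcomp2 : (aeval φf).comp (aeval ψf) = AlgHom.id ℝ (MvPolynomial (Fin (N+1)) ℝ) := by
    rw [comp_aeval]
    rw [show (fun i => aeval φf (ψf i)) = X by funext i; exact key2 i]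
    exact aeval_X_left
  refine ⟨AlgEquiv.ofAlgHom (aeval φf) (aeval ψf) hcomp2 hcomp1, ?_, ?_⟩
  · intro p x
    have h1 : (aeval x).comp (aeval φf) = aeval (fun i => aeval x (φf i)) := by rw [comp_aeval]
    have h2 : eval x (aeval φf p) = aeval (fun i => aeval x (φf i)) p := by
      rw [← h1]
      simp only [AlgHom.comp_apply]
      exact DFunLike.congr_fun (coe_aeval_eq_eval x) _
    rw [show (AlgEquiv.ofAlgHom (aeval φf) (aeval ψf) hcomp2 hcomp1) p = aeval φf p from rfl, h2]
    have h3 : (fun i => aeval x (φf i)) = fun i => b' i * x 0 + (if i = 0 then 0 else x i) := by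
      funext i
      by_cases hi : i = 0 <;> simp [hφf, hi, algebraMap_eq]
    rw [h3]
    exact DFunLike.congr_fun (coe_aeval_eq_eval _) _
  · intro y
    refine ⟨fun i => if i = 0 then y 0 / b' 0 else y i - b' i * (y 0 / b' 0), ?_⟩
    funext i
    by_cases hi : i = 0
    · subst hi
      simp only [if_pos rfl]
      simp only [if_true, add_zero]
      field_simp
    · simp only [if_neg hi, if_pos rfl, if_true, eq_self_iff_true]
      field_simp
      ring

private lemma eq_smul_of_dvd_homog {n d : ℕ} (h p : MvPolynomial (Fin n) ℝ)
    (hh : h.IsHomogeneous d) (hp : p.IsHomogeneous d) (hne : h ≠ 0) (hdvd : h ∣ p) :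
    ∃ c : ℝ, p = c • h := by
  obtain ⟨q, rfl⟩ := hdvd
  refine ⟨coeff 0 q, ?_⟩
  suffices hq : q = C (coeff 0 q) by
    rw [smul_eq_C_mul, mul_comm]
    conv_lhs => rw [hq]
  have hcomp : ∀ i : ℕ, i ≠ 0 → homogeneousComponent i q = 0 := by
    intro i hi
    have hzero : homogeneousComponent (d + i) (h * q) = 0 := by
      have hmem : h * q ∈ homogeneousSubmodule (Fin n) ℝ d :=
        (mem_homogeneousSubmodule _ _).mpr hp
      rw [homogeneousComponent_of_mem hmem]
      simp [Nat.add_eq_left, hi]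
    have hcalc : homogeneousComponent (d + i) (h * q) = h * homogeneousComponent i q := by
      conv_lhs => rw [← sum_homogeneousComponent q, Finset.mul_sum, map_sum]
      have hterm : ∀ k ∈ Finset.range (q.totalDegree + 1),
          homogeneousComponent (d + i) (h * homogeneousComponent k q)
            = if k = i then h * homogeneousComponent k q else 0 := by
        intro k _
        have hmemk : h * homogeneousComponent k q ∈ homogeneousSubmodule (Fin n) ℝ (d + k) :=
          (mem_homogeneousSubmodule _ _).mpr (hh.mul (homogeneousComponent_isHomogeneous k q))
        rw [homogeneousComponent_of_mem hmemk]
        by_cases hk : k = i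
        · subst hk; simp
        · rw [if_neg (by omega), if_neg hk]
      rw [Finset.sum_congr rfl hterm]
      by_cases hin : i ∈ Finset.range (q.totalDegree + 1)
      · rw [Finset.sum_ite_eq' _ _ (fun k => h * homogeneousComponent k q), if_pos hin]
      · rw [Finset.sum_ite_eq' _ _ (fun k => h * homogeneousComponent k q), if_neg hin]
        have : homogeneousComponent i q = 0 := by
          apply homogeneousComponent_eq_zero
          simp only [Finset.mem_range, not_lt] at hin
          omega
        rw [this, mul_zero]
    have : h * homogeneousComponent i q = 0 := by rw [← hcalc, hzero]
    rcases mul_eq_zero.mp this with hc | hc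
    · exact absurd hc hne
    · exact hc
  conv_lhs => rw [← sum_homogeneousComponent q]
  rw [Finset.sum_eq_single 0]
  · exact homogeneousComponent_zero q
  · intro k _ hk; exact hcomp k hk
  · intro hnot
    simp at hnot

theorem sq_of_indefinite_irreducible_sos (n d m : ℕ)
    (h : MvPolynomial (Fin n) ℝ) (hhom : h.IsHomogeneous d)
    (hindef : ∃ a b : Fin n → ℝ, 0 < eval a h ∧ eval b h < 0)
    (hirr : Irreducible h)
    (f : Fin m → MvPolynomial (Fin n) ℝ)
    (hf : ∀ j, (f j).IsHomogeneous d)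
    (heq : h ^ 2 = ∑ j, (f j) ^ 2) :
    ∃ lam : Fin m → ℝ, (∑ j, (lam j) ^ 2 = 1) ∧ ∀ j, f j = lam j • h := by
  classical
  obtain ⟨a, b, ha, hb⟩ := hindef
  have hh0 : h ≠ 0 := by
    intro hz
    rw [hz, map_zero] at ha
    exact lt_irrefl 0 ha
  cases n with
  | zero =>
    exact absurd (Subsingleton.elim a b ▸ ha) (not_lt.mpr hb.le)
  | succ N =>
  -- d ≥ 1
  have hd1 : 1 ≤ d := by
    by_contra hd
    push_neg at hd
    interval_cases d
    have hC : h = C (coeff 0 h) := by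
      ext mo
      rw [coeff_C]
      by_cases hmo : mo = 0
      · subst hmo; simp
      · rw [if_neg (Ne.symm hmo)]
        apply hhom.coeff_eq_zero
        intro hdeg
        exact hmo ((Finsupp.degree_eq_zero_iff mo).mp hdeg)
    by_cases hc0 : coeff 0 h = 0
    · rw [hc0, map_zero] at hC
      exact hh0 hC
    · refine hirr.not_isUnit ?_
      rw [hC]
      exact (isUnit_iff_ne_zero.mpr hc0).map (C : ℝ →+* MvPolynomial (Fin (N+1)) ℝ)
  -- eval at 0 vanishes
  have heval0 : ∀ x : Fin (N+1) → ℝ, eval ((0:ℝ) • x) h = 0 := by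
    intro x
    rw [eval_smul_homog' h hhom]
    rw [zero_pow (by omega : d ≠ 0), zero_mul]
  -- b ≠ 0
  have hbne : b ≠ 0 := by
    intro hbz
    have : eval b h = 0 := by
      have := heval0 0
      rwa [smul_zero, ← hbz] at this
    rw [this] at hb
    exact lt_irrefl 0 hb
  -- pointwise: zeros of h are zeros of f j
  have hsq : ∀ x : Fin (N+1) → ℝ, (eval x h)^2 = ∑ j, (eval x (f j))^2 := by
    intro x
    have := congrArg (eval x) heq
    simpa [map_pow] using this
  have hzero : ∀ (j : Fin m) (x : Fin (N+1) → ℝ), eval x h = 0 → eval x (f j) = 0 := by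
    intro j x hx
    have h0 : ∑ j, (eval x (f j))^2 = 0 := by rw [← hsq, hx]; ring
    have hz := (Finset.sum_eq_zero_iff_of_nonneg (fun j _ => sq_nonneg (eval x (f j)))).mp h0
    exact (pow_eq_zero_iff (by norm_num : (2:ℕ) ≠ 0)).mp (hz j (Finset.mem_univ j))
  -- choose coordinate with b i₀ ≠ 0
  obtain ⟨i₀, hi₀⟩ : ∃ i, b i ≠ 0 := by
    by_contra hc
    push_neg at hc
    exact hbne (funext hc)
  set σp := Equiv.swap (0 : Fin (N+1)) i₀ with hσp
  set b' : Fin (N+1) → ℝ := b ∘ σp with hb'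
  have hb'0 : b' 0 ≠ 0 := by
    simp only [hb', Function.comp_apply, hσp, Equiv.swap_apply_left]
    exact hi₀
  obtain ⟨e, he, hsurj⟩ := exists_linear_equiv b' hb'0
  set W : (Fin (N+1) → ℝ) → (Fin (N+1) → ℝ) :=
    fun x i => b' i * x 0 + (if i = 0 then 0 else x i) with hW
  set V : (Fin (N+1) → ℝ) → (Fin (N+1) → ℝ) := fun x => (W x) ∘ σp with hV
  set E : MvPolynomial (Fin (N+1)) ℝ ≃ₐ[ℝ] MvPolynomial (Fin (N+1)) ℝ :=
    (renameEquiv ℝ σp).trans e with hE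
  have hVeval : ∀ (p : MvPolynomial (Fin (N+1)) ℝ) (x : Fin (N+1) → ℝ),
      eval x (E p) = eval (V x) p := by
    intro p x
    have h1 : E p = e (rename σp p) := rfl
    rw [h1, he (rename σp p) x]
    simp only [hV]
    exact eval_rename (⇑σp) (W x) p
  have hσσ : ∀ j, σp (σp j) = j := fun j => Equiv.swap_apply_self _ _ j
  have hb'σ : ∀ j, b' (σp j) = b j := by
    intro j
    simp only [hb', Function.comp_apply, hσσ]
  have hVsurj : ∀ y : Fin (N+1) → ℝ, ∃ x, V x = y := by
    intro y
    obtain ⟨x, hx⟩ := hsurj (y ∘ σp)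
    refine ⟨x, ?_⟩
    funext j
    have hxj := congrFun hx (σp j)
    calc V x j = W x (σp j) := rfl
      _ = (y ∘ σp) (σp j) := by rw [show W x = y ∘ ⇑σp from hx]
      _ = y j := by simp only [Function.comp_apply, hσσ]
  -- structure of V on cons
  have hVcons0 : ∀ (t : ℝ) (u : Fin N → ℝ) (j : Fin (N+1)),
      V (Fin.cons t u) j = t * b j + (if σp j = 0 then 0 else (Fin.cons t u : Fin (N+1) → ℝ) (σp j)) := by
    intro t u j
    simp only [hV, hW, Function.comp_apply, hb'σ]
    by_cases hj : σp j = 0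
    · simp [hj, Fin.cons_zero, mul_comm]
    · simp [hj, Fin.cons_zero, mul_comm]
  have hVconsadd : ∀ (t T : ℝ) (u : Fin N → ℝ),
      V (Fin.cons (t+T) u) = fun j => V (Fin.cons t u) j + T * b j := by
    intro t T u
    funext j
    rw [hVcons0, hVcons0]
    by_cases hj : σp j = 0
    · simp only [if_pos hj]; ring
    · obtain ⟨k, hk⟩ := Fin.exists_succ_eq_of_ne_zero hj
      simp only [if_neg hj, ← hk, Fin.cons_succ]
      ring
  -- point mapping to a
  obtain ⟨xa, hxa⟩ := hVsurj a
  set ta : ℝ := xa 0 with hta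
  set u₀ : Fin N → ℝ := Fin.tail xa with hu₀
  have hconsxa : Fin.cons ta u₀ = xa := Fin.cons_self_tail xa
  -- continuity generic facts
  have hconscont : ∀ t : ℝ, Continuous fun u : Fin N → ℝ => (Fin.cons t u : Fin (N+1) → ℝ) := by
    intro t
    apply continuous_pi
    intro j
    refine Fin.cases ?_ ?_ j
    · simpa using continuous_const
    · intro k
      simpa using continuous_apply k
  have hVcont : Continuous V := by
    apply continuous_pi
    intro j
    simp only [hV, hW, Function.comp_apply]
    apply Continuous.add
    · exact continuous_const.mul (continuous_apply 0)
    · by_cases hj : σp j = 0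
      · simpa [hj] using continuous_const
      · simpa [hj] using continuous_apply (σp j)
  -- find T with eval (a + T • b) h < 0
  obtain ⟨T, hT0, hTneg⟩ : ∃ T : ℝ, 0 < T ∧ eval (a + T • b) h < 0 := by
    have hgc : Continuous fun s : ℝ => eval (s • a + b) h := by
      apply (MvPolynomial.continuous_eval h).comp
      apply continuous_pi
      intro j
      simp only [Pi.add_apply, Pi.smul_apply, smul_eq_mul]
      exact (continuous_id.mul continuous_const).add continuous_const
    have h0 : (fun s : ℝ => eval (s • a + b) h) 0 = eval b h := by simp
    have hopen : IsOpen {s : ℝ | eval (s • a + b) h < 0} :=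
      isOpen_lt hgc continuous_const
    have hmem : (0:ℝ) ∈ {s : ℝ | eval (s • a + b) h < 0} := by
      simpa [h0] using hb
    obtain ⟨δ, hδ, hball⟩ := Metric.isOpen_iff.mp hopen 0 hmem
    set s : ℝ := δ/2 with hs
    have hs0 : 0 < s := by positivity
    have hsmem : s ∈ {s : ℝ | eval (s • a + b) h < 0} := by
      apply hball
      rw [Metric.mem_ball, Real.dist_eq]
      rw [sub_zero, abs_of_pos hs0]
      linarith
    refine ⟨s⁻¹, inv_pos.mpr hs0, ?_⟩
    have heqpt : a + s⁻¹ • b = s⁻¹ • (s • a + b) := by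
      rw [smul_add, smul_smul, inv_mul_cancel₀ (ne_of_gt hs0), one_smul]
    rw [heqpt, eval_smul_homog' h hhom]
    have : eval (s • a + b) h < 0 := hsmem
    have hpow : 0 < (s⁻¹) ^ d := pow_pos (inv_pos.mpr hs0) d
    exact mul_neg_of_pos_of_neg hpow this
  -- two continuous slice functions
  set P : (Fin N → ℝ) → ℝ := fun u => eval (V (Fin.cons ta u)) h with hP
  set Q : (Fin N → ℝ) → ℝ := fun u => eval (V (Fin.cons (ta + T) u)) h with hQ
  have hPcont : Continuous P := (MvPolynomial.continuous_eval h).comp (hVcont.comp (hconscont ta))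
  have hQcont : Continuous Q := (MvPolynomial.continuous_eval h).comp (hVcont.comp (hconscont _))
  have hPu₀ : P u₀ = eval a h := by rw [hP]; simp only; rw [hconsxa, hxa]
  have hQu₀ : Q u₀ = eval (a + T • b) h := by
    have hpt : (fun j => V (Fin.cons ta u₀) j + T * b j) = a + T • b := by
      funext j
      rw [hconsxa, hxa]
      simp [smul_eq_mul]
    rw [hQ]
    simp only
    rw [hVconsadd ta T u₀, hpt]
  -- open ball where P > 0 and Q < 0
  obtain ⟨ε, hε, hballPQ⟩ : ∃ ε : ℝ, 0 < ε ∧ ∀ u : Fin N → ℝ, dist u u₀ < ε →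
      0 < P u ∧ Q u < 0 := by
    have hopen : IsOpen {u : Fin N → ℝ | 0 < P u ∧ Q u < 0} :=
      (isOpen_lt continuous_const hPcont).inter (isOpen_lt hQcont continuous_const)
    have hmem : u₀ ∈ {u : Fin N → ℝ | 0 < P u ∧ Q u < 0} := by
      constructor
      · show 0 < P u₀
        rw [hPu₀]; exact ha
      · show Q u₀ < 0
        rw [hQu₀]; exact hTneg
    obtain ⟨ε, hε, hball⟩ := Metric.isOpen_iff.mp hopen u₀ hmem
    exact ⟨ε, hε, fun u hu => hball (Metric.mem_ball.mpr hu)⟩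
  -- roots along slices for E h
  have hroot : ∀ u : Fin N → ℝ, dist u u₀ < ε → ∃ t : ℝ, eval (Fin.cons t u) (E h) = 0 := by
    intro u hu
    obtain ⟨hPu, hQu⟩ := hballPQ u hu
    set Wf : ℝ → ℝ := fun t => eval (Fin.cons t u) (E h) with hWf
    have hWcont : Continuous Wf := by
      apply (MvPolynomial.continuous_eval (E h)).comp
      apply continuous_pi
      intro j
      refine Fin.cases ?_ ?_ j
      · simpa using continuous_id'
      · intro k
        simpa using continuous_const
    have hWta : Wf ta = P u := by rw [hWf]; simp only; rw [hVeval]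
    have hWtaT : Wf (ta + T) = Q u := by rw [hWf]; simp only; rw [hVeval]
    have hsub := intermediate_value_Icc' (by linarith : ta ≤ ta + T) hWcont.continuousOn
    have h0mem : (0:ℝ) ∈ Set.Icc (Wf (ta + T)) (Wf ta) := by
      rw [hWta, hWtaT]
      exact ⟨le_of_lt hQu, le_of_lt hPu⟩
    obtain ⟨t, -, ht⟩ := hsub h0mem
    exact ⟨t, ht⟩
  -- irreducibility and degree of E h
  have hEirr : Irreducible (E h) :=
    irreducible_map_equiv' E.toRingEquiv.toMulEquiv hirr
  have hVcons00 : V (Fin.cons (1:ℝ) (0 : Fin N → ℝ)) = (1:ℝ) • b ∧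
      V (Fin.cons (0:ℝ) (0 : Fin N → ℝ)) = (0:ℝ) • b := by
    constructor <;>
    · funext j
      rw [hVcons0]
      by_cases hj : σp j = 0
      · simp [hj]
      · obtain ⟨k, hk⟩ := Fin.exists_succ_eq_of_ne_zero hj
        simp [← hk, Fin.cons_succ, mul_comm]
  have hdeg : 1 ≤ (finSuccEquiv ℝ N (E h)).natDegree := by
    by_contra hdd
    push_neg at hdd
    obtain ⟨r, hr⟩ := Polynomial.natDegree_eq_zero.mp (by omega : (finSuccEquiv ℝ N (E h)).natDegree = 0)
    have hev : ∀ t : ℝ, eval (Fin.cons t (0 : Fin N → ℝ)) (E h) = eval u₀ 0 * 0 + Polynomial.eval t (Polynomial.map (eval (0 : Fin N → ℝ)) (finSuccEquiv ℝ N (E h))) := by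
      intro t
      rw [eval_eq_eval_mv_eval']
      ring
    have hc1 : eval (Fin.cons (1:ℝ) (0 : Fin N → ℝ)) (E h) = eval b h := by
      rw [hVeval, hVcons00.1, one_smul]
    have hc0 : eval (Fin.cons (0:ℝ) (0 : Fin N → ℝ)) (E h) = 0 := by
      rw [hVeval, hVcons00.2]
      exact heval0 b
    rw [hev 1, ← hr] at hc1
    rw [hev 0, ← hr] at hc0
    simp only [Polynomial.map_C, Polynomial.eval_C, zero_mul, mul_zero, zero_add, add_zero] at hc1 hc0
    rw [hc0] at hc1
    exact (ne_of_lt hb) hc1.symm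
  -- divisibility
  have hdvd : ∀ j, h ∣ f j := by
    intro j
    have hEzero : ∀ x : Fin (N+1) → ℝ, eval x (E h) = 0 → eval x (E (f j)) = 0 := by
      intro x hx
      rw [hVeval] at hx ⊢
      exact hzero j (V x) hx
    have hEdvd : E h ∣ E (f j) := key_dvd (E h) (E (f j)) hEirr hdeg hEzero u₀ ε hε hroot
    obtain ⟨q, hq⟩ := hEdvd
    refine ⟨E.symm q, E.injective ?_⟩
    rw [map_mul, AlgEquiv.apply_symm_apply]
    exact hq
  -- conclude with scalars
  choose lam hlam using fun j => eq_smul_of_dvd_homog h (f j) hhom (hf j) hh0 (hdvd j)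
  refine ⟨lam, ?_, hlam⟩
  have hkey : h ^ 2 = C (∑ j, lam j ^ 2) * h ^ 2 := by
    conv_lhs => rw [heq]
    have : ∀ j : Fin m, (f j) ^ 2 = C (lam j ^ 2) * h ^ 2 := by
      intro j
      rw [hlam j, smul_eq_C_mul]
      rw [mul_pow, ← C_pow]
    rw [Finset.sum_congr rfl (fun j _ => this j), ← Finset.sum_mul, map_sum]
  have hC1 : C (∑ j, lam j ^ 2) = (1 : MvPolynomial (Fin (N+1)) ℝ) := by
    have hh2 : h ^ 2 ≠ 0 := pow_ne_zero 2 hh0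
    have := hkey
    rw [show h ^ 2 = 1 * h ^ 2 from (one_mul _).symm] at this
    nth_rewrite 2 [show (1 : MvPolynomial (Fin (N+1)) ℝ) * h ^ 2 = h^2 from one_mul _] at this
    exact (mul_right_cancel₀ hh2 this.symm)
  have := C_injective (Fin (N+1)) ℝ (by rw [hC1, map_one] : C (∑ j, lam j ^ 2) = C 1)
  simpa using this
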